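/- Let X_1, X_2, ... be iid nonnegative random variables with E X_1² < ∞. Then for every ε ∈ (0,1), defining X̂_k = X_k 1_{X_k² < ε² k}, the truncated centered sum R̂ = t^{-1/2} Σ_{k∈T_t} (E X̂_k² − X̂_k²) k^{(2ν)^{-1} − 1} satisfies P(R̂ > ε^{1/2}) ≤ c ε for a constant c independent of ε and t, where T_t = {k : a t^ν ≤ k ≤ b t^ν} and ν > 1, b > a > 0. -/

import Mathlib

open MeasureTheory ProbabilityTheory Finset

section aux
variable {Ω : Type*} [MeasurableSpace Ω] {μ : Measure Ω} [IsProbabilityMeasure μ]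

lemma cheb_toReal (S : Ω → ℝ) (hS : MemLp S 2 μ) (hmean : μ[S] = 0) {c0 : ℝ} (hc0 : 0 < c0) :
    (μ {ω | c0 < S ω}).toReal ≤ variance S μ / c0 ^ 2 := by
  have hsub : {ω | c0 < S ω} ⊆ {ω | c0 ≤ |S ω - μ[S]|} := by
    intro ω hω
    simp only [Set.mem_setOf_eq, hmean, sub_zero] at *
    exact le_trans hω.le (le_abs_self _)
  refine ENNReal.toReal_le_of_le_ofReal (div_nonneg (variance_nonneg _ _) (sq_nonneg _)) ?_
  exact le_trans (measure_mono hsub) (meas_ge_le_variance_div_sq hS hc0)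

lemma integrable_of_forall_bound {f : Ω → ℝ} (hm : AEStronglyMeasurable f μ) (C : ℝ)
    (h : ∀ ω, |f ω| ≤ C) : Integrable f μ :=
  memLp_one_iff_integrable.mp (MemLp.of_bound hm C (Filter.Eventually.of_forall h))

end aux

theorem stmt18 {Ω : Type*} [MeasurableSpace Ω] (μ : Measure Ω) [IsProbabilityMeasure μ]
    (X : ℕ → Ω → ℝ) (hmeas : ∀ k, Measurable (X k))
    (hnonneg : ∀ k ω, 0 ≤ X k ω)
    (hindep : iIndepFun X μ)
    (hident : ∀ k, IdentDistrib (X k) (X 1) μ μ)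
    (hL2 : Integrable (fun ω => X 1 ω ^ 2) μ)
    (ν a b : ℝ) (hν : 1 < ν) (ha : 0 < a) (hab : a < b) :
    ∃ c : ℝ, ∀ ε : ℝ, 0 < ε → ε < 1 → ∀ t : ℕ, 1 ≤ t →
      (μ {ω | Real.sqrt ε <
          (t : ℝ) ^ (-(1/2 : ℝ)) *
            ∑ k ∈ Finset.Icc ⌈a * (t : ℝ) ^ ν⌉₊ ⌊b * (t : ℝ) ^ ν⌋₊,
              ((∫ ω', (if (X k ω') ^ 2 < ε ^ 2 * k then X k ω' else 0) ^ 2 ∂μ)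
                  - (if (X k ω) ^ 2 < ε ^ 2 * k then X k ω else 0) ^ 2) *
                (k : ℝ) ^ ((2 * ν)⁻¹ - 1)}).toReal
        ≤ c * ε := by
  classical
  have hν0 : (0:ℝ) < ν := lt_trans one_pos hν
  set M : ℝ := ∫ ω', X 1 ω' ^ 2 ∂μ with hMdef
  have hM0 : 0 ≤ M := integral_nonneg fun ω => sq_nonneg _
  refine ⟨b * a ^ (ν⁻¹ - 1) * M, ?_⟩
  intro ε hε hε1 t ht
  have ht0 : (0:ℝ) < (t:ℝ) := by exact_mod_cast Nat.lt_of_lt_of_le Nat.zero_lt_one ht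
  set α : ℝ := (2 * ν)⁻¹ - 1 with hα
  set T : Finset ℕ := Finset.Icc ⌈a * (t : ℝ) ^ ν⌉₊ ⌊b * (t : ℝ) ^ ν⌋₊ with hT
  set Xh : ℕ → Ω → ℝ := fun k ω => if (X k ω) ^ 2 < ε ^ 2 * k then X k ω else 0 with hXh
  set cI : ℕ → ℝ := fun k => ∫ ω', (Xh k ω') ^ 2 ∂μ with hcI
  set Y : ℕ → Ω → ℝ := fun k ω => (cI k - (Xh k ω) ^ 2) * (k : ℝ) ^ α with hY
  -- basic facts
  have hXhm : ∀ k, Measurable (Xh k) := fun k =>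
    Measurable.ite (measurableSet_lt ((hmeas k).pow_const 2) measurable_const) (hmeas k)
      measurable_const
  have hZ_bd : ∀ k ω, (Xh k ω) ^ 2 ≤ ε ^ 2 * k := by
    intro k ω
    by_cases h : (X k ω) ^ 2 < ε ^ 2 * k
    · simp only [hXh, if_pos h]; exact h.le
    · simp only [hXh, if_neg h]
      norm_num
      positivity
  have hZint : ∀ k, Integrable (fun ω => (Xh k ω) ^ 2) μ := by
    intro k
    refine integrable_of_forall_bound (((hXhm k).pow_const 2).aestronglyMeasurable) (ε ^ 2 * k) ?_
    intro ω; rw [abs_of_nonneg (sq_nonneg _)]; exact hZ_bd k ω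
  have hcI_nn : ∀ k, 0 ≤ cI k := fun k => integral_nonneg fun ω => sq_nonneg _
  have hcI_le : ∀ k, cI k ≤ ε ^ 2 * k := by
    intro k
    calc cI k ≤ ∫ _ω, ε ^ 2 * k ∂μ := integral_mono (hZint k) (integrable_const _) (hZ_bd k)
    _ = ε ^ 2 * k := by simp
  have hXk2int : ∀ k, Integrable (fun ω => X k ω ^ 2) μ := by
    intro k
    exact ((hident k).comp (measurable_id.pow_const 2)).integrable_iff.mpr hL2
  have hcI_le_M : ∀ k, cI k ≤ M := by
    intro k
    have h1 : cI k ≤ ∫ ω, X k ω ^ 2 ∂μ := by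
      refine integral_mono (hZint k) (hXk2int k) ?_
      intro ω
      by_cases h : (X k ω) ^ 2 < ε ^ 2 * k
      · simp only [hXh, if_pos h]; exact le_rfl
      · simp only [hXh, if_neg h]
        simpa using sq_nonneg (X k ω)
    have h2 : ∫ ω, X k ω ^ 2 ∂μ = M := ((hident k).comp (measurable_id.pow_const 2)).integral_eq
    linarith
  -- Y facts
  have hYm : ∀ k, Measurable (Y k) := fun k =>
    ((measurable_const.sub ((hXhm k).pow_const 2)).mul_const _)
  have hkα_nn : ∀ k : ℕ, 0 ≤ (k:ℝ) ^ α := fun k => Real.rpow_nonneg (Nat.cast_nonneg k) α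
  have hYbd : ∀ k ω, |Y k ω| ≤ (ε ^ 2 * k) * (k:ℝ) ^ α := by
    intro k ω
    rw [hY, abs_mul, abs_of_nonneg (hkα_nn k)]
    have h1 : |cI k - (Xh k ω) ^ 2| ≤ ε ^ 2 * k := by
      have := hZ_bd k ω; have := hcI_nn k; have := hcI_le k; have := sq_nonneg (Xh k ω)
      rw [abs_le]; constructor <;> linarith
    exact mul_le_mul_of_nonneg_right h1 (hkα_nn k)
  have hYmem : ∀ k, MemLp (Y k) 2 μ := by
    intro k
    exact MemLp.of_bound (hYm k).aestronglyMeasurable _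
      (Filter.Eventually.of_forall fun ω => (hYbd k ω))
  have hYmean : ∀ k, μ[Y k] = 0 := by
    intro k
    have : μ[Y k] = (∫ ω, (cI k - (Xh k ω) ^ 2) ∂μ) * (k:ℝ) ^ α := integral_mul_const _ _
    rw [this, integral_sub (integrable_const _) (hZint k), integral_const]
    simp [← hcI]
    exact Or.inl (sub_self _)
  -- event rewriting
  set c0 : ℝ := Real.sqrt ε * (t:ℝ) ^ ((1:ℝ)/2) with hc0def
  have hc0 : 0 < c0 := mul_pos (Real.sqrt_pos.2 hε) (Real.rpow_pos_of_pos ht0 _)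
  have hsetiff : ∀ s : ℝ, (Real.sqrt ε < (t:ℝ) ^ (-(1/2:ℝ)) * s ↔ c0 < s) := by
    intro s
    rw [Real.rpow_neg ht0.le, lt_inv_mul_iff₀ (Real.rpow_pos_of_pos ht0 _), hc0def, mul_comm]
  have hgoal : {ω | Real.sqrt ε < (t : ℝ) ^ (-(1/2 : ℝ)) *
        ∑ k ∈ T, ((∫ ω', (if (X k ω') ^ 2 < ε ^ 2 * k then X k ω' else 0) ^ 2 ∂μ)
            - (if (X k ω) ^ 2 < ε ^ 2 * k then X k ω else 0) ^ 2) * (k : ℝ) ^ α}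
      = {ω | c0 < ∑ k ∈ T, Y k ω} := by
    ext ω
    simp only [Set.mem_setOf_eq, hY, hXh, hcI]
    exact hsetiff _
  rw [hgoal]
  -- Chebyshev
  have hSfun : (fun ω => ∑ k ∈ T, Y k ω) = ∑ k ∈ T, Y k := by ext ω; simp
  have hSmem : MemLp (fun ω => ∑ k ∈ T, Y k ω) 2 μ := by
    rw [hSfun]; exact memLp_finset_sum' T fun k _ => hYmem k
  have hSmean : μ[fun ω => ∑ k ∈ T, Y k ω] = 0 := by
    rw [integral_finset_sum T fun k _ => (hYmem k).integrable one_le_two]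
    simp [hYmean]
  have key := cheb_toReal (μ := μ) (fun ω => ∑ k ∈ T, Y k ω) hSmem hSmean hc0
  refine le_trans key ?_
  -- variance of the sum
  have hvarsum : variance (fun ω => ∑ k ∈ T, Y k ω) μ = ∑ k ∈ T, variance (Y k) μ := by
    rw [hSfun]
    refine IndepFun.variance_sum (fun k _ => hYmem k) ?_
    intro i _ j _ hij
    have hφm : ∀ k : ℕ, Measurable fun x : ℝ =>
        (cI k - (if x ^ 2 < ε ^ 2 * k then x else 0) ^ 2) * (k:ℝ) ^ α := by
      intro k
      exact (measurable_const.sub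
        ((Measurable.ite (measurableSet_lt (measurable_id.pow_const 2) measurable_const)
          measurable_id measurable_const).pow_const 2)).mul_const _
    exact (hindep.indepFun hij).comp (hφm i) (hφm j)
  have hcIk : ∀ k, (∫ ω, (Xh k ω) ^ 2 ∂μ) = cI k := fun k => rfl
  -- variance of each term
  have hvar : ∀ k ∈ T, variance (Y k) μ ≤ ε ^ 2 * M * (k:ℝ) ^ (ν⁻¹ - 1) := by
    intro k hk
    have hk1 : 1 ≤ k := by
      have h1 := (Finset.mem_Icc.mp hk).1
      have hpos : 0 < ⌈a * (t:ℝ)^ν⌉₊ := Nat.ceil_pos.mpr (by positivity)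
      omega
    have hkpos : (0:ℝ) < (k:ℝ) := by exact_mod_cast Nat.lt_of_lt_of_le Nat.zero_lt_one hk1
    have h1 : variance (Y k) μ ≤ μ[(Y k) ^ 2] :=
      variance_le_expectation_sq (hYm k).aestronglyMeasurable
    have h2 : μ[(Y k) ^ 2] = (∫ ω, (cI k - (Xh k ω) ^ 2) ^ 2 ∂μ) * ((k:ℝ) ^ α) ^ 2 := by
      simp only [hY, Pi.pow_apply, mul_pow]
      exact integral_mul_const _ _
    have hZ4int : Integrable (fun ω => ((Xh k ω) ^ 2) ^ 2) μ := by
      refine integrable_of_forall_bound ((((hXhm k).pow_const 2).pow_const 2).aestronglyMeasurable)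
        ((ε ^ 2 * k) ^ 2) fun ω => ?_
      rw [abs_of_nonneg (sq_nonneg _)]
      exact pow_le_pow_left₀ (sq_nonneg _) (hZ_bd k ω) 2
    have h3 : ∫ ω, (cI k - (Xh k ω) ^ 2) ^ 2 ∂μ
        = (∫ ω, ((Xh k ω) ^ 2) ^ 2 ∂μ) - (cI k) ^ 2 := by
      have e1 : ∀ ω, (cI k - (Xh k ω) ^ 2) ^ 2
          = (cI k ^ 2 - (2 * cI k) * ((Xh k ω) ^ 2)) + ((Xh k ω) ^ 2) ^ 2 := by
        intro ω; ring
      simp only [e1]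
      have i1 : Integrable (fun ω => cI k ^ 2 - (2 * cI k) * (Xh k ω) ^ 2) μ :=
        (integrable_const _).sub ((hZint k).const_mul _)
      have i2 : Integrable (fun ω => (2 * cI k) * (Xh k ω) ^ 2) μ := (hZint k).const_mul _
      rw [integral_add i1 hZ4int, integral_sub (integrable_const _) i2, integral_const_mul,
        integral_const, hcIk]
      simp only [measure_univ, ENNReal.toReal_one, smul_eq_mul, one_mul, probReal_univ]
      ring
    have h4 : ∫ ω, ((Xh k ω) ^ 2) ^ 2 ∂μ ≤ ε ^ 2 * k * M := by
      have p1 : ∫ ω, ((Xh k ω) ^ 2) ^ 2 ∂μ ≤ ∫ ω, (ε ^ 2 * k) * (Xh k ω) ^ 2 ∂μ := by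
        refine integral_mono hZ4int ((hZint k).const_mul _) fun ω => ?_
        calc ((Xh k ω) ^ 2) ^ 2 = (Xh k ω) ^ 2 * (Xh k ω) ^ 2 := by ring
        _ ≤ (ε ^ 2 * k) * (Xh k ω) ^ 2 := mul_le_mul_of_nonneg_right (hZ_bd k ω) (sq_nonneg _)
      rw [integral_const_mul, hcIk] at p1
      have p2 : ε ^ 2 * (k:ℝ) * cI k ≤ ε ^ 2 * k * M :=
        mul_le_mul_of_nonneg_left (hcI_le_M k) (by positivity)
      linarith
    have h5 : variance (Y k) μ ≤ (ε ^ 2 * k * M) * ((k:ℝ) ^ α) ^ 2 := by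
      have hintle : ∫ ω, (cI k - (Xh k ω) ^ 2) ^ 2 ∂μ ≤ ε ^ 2 * k * M := by
        rw [h3]; nlinarith [sq_nonneg (cI k)]
      calc variance (Y k) μ ≤ μ[(Y k) ^ 2] := h1
      _ = (∫ ω, (cI k - (Xh k ω) ^ 2) ^ 2 ∂μ) * ((k:ℝ) ^ α) ^ 2 := h2
      _ ≤ (ε ^ 2 * k * M) * ((k:ℝ) ^ α) ^ 2 :=
          mul_le_mul_of_nonneg_right hintle (sq_nonneg _)
    have hkα : (k:ℝ) * ((k:ℝ) ^ α) ^ 2 = (k:ℝ) ^ (ν⁻¹ - 1) := by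
      have h2' : ((k:ℝ) ^ α) ^ (2:ℕ) = (k:ℝ) ^ (α * 2) := by
        rw [← Real.rpow_natCast ((k:ℝ) ^ α) 2, ← Real.rpow_mul hkpos.le]
        norm_num
      rw [h2']
      nth_rewrite 1 [← Real.rpow_one (k:ℝ)]
      rw [← Real.rpow_add hkpos]
      congr 1
      rw [hα]
      field_simp
      ring
    calc variance (Y k) μ ≤ (ε ^ 2 * k * M) * ((k:ℝ) ^ α) ^ 2 := h5
    _ = ε ^ 2 * M * ((k:ℝ) * ((k:ℝ) ^ α) ^ 2) := by ring
    _ = ε ^ 2 * M * (k:ℝ) ^ (ν⁻¹ - 1) := by rw [hkα]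
  -- sum bound
  have hatν : (0:ℝ) < a * (t:ℝ) ^ ν := by positivity
  have hexp_np : ν⁻¹ - 1 ≤ 0 := by
    have h1 : ν⁻¹ ≤ 1 := (inv_le_one₀ hν0).mpr hν.le
    linarith
  have hsum : ∑ k ∈ T, (k:ℝ) ^ (ν⁻¹ - 1) ≤ b * a ^ (ν⁻¹ - 1) * t := by
    have hterm : ∀ k ∈ T, (k:ℝ) ^ (ν⁻¹ - 1) ≤ (a * (t:ℝ) ^ ν) ^ (ν⁻¹ - 1) := by
      intro k hk
      have h1 : a * (t:ℝ) ^ ν ≤ (k:ℝ) :=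
        le_trans (Nat.le_ceil _) (by exact_mod_cast (Finset.mem_Icc.mp hk).1)
      exact Real.rpow_le_rpow_of_nonpos hatν h1 hexp_np
    have hcard : (T.card : ℝ) ≤ b * (t:ℝ) ^ ν := by
      have h1 : T.card ≤ ⌊b * (t:ℝ) ^ ν⌋₊ := by
        rw [hT, Nat.card_Icc]
        have h2 : 1 ≤ ⌈a * (t:ℝ) ^ ν⌉₊ := Nat.one_le_ceil_iff.mpr hatν
        omega
      calc (T.card : ℝ) ≤ (⌊b * (t:ℝ) ^ ν⌋₊ : ℝ) := by exact_mod_cast h1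
      _ ≤ b * (t:ℝ) ^ ν := Nat.floor_le (mul_pos (ha.trans hab) (Real.rpow_pos_of_pos ht0 ν)).le
    have htt : (t:ℝ) ^ ν * (t:ℝ) ^ (ν * (ν⁻¹ - 1)) = (t:ℝ) := by
      rw [← Real.rpow_add ht0]
      have : ν + ν * (ν⁻¹ - 1) = 1 := by field_simp; ring
      rw [this, Real.rpow_one]
    calc ∑ k ∈ T, (k:ℝ) ^ (ν⁻¹ - 1) ≤ T.card • (a * (t:ℝ) ^ ν) ^ (ν⁻¹ - 1) :=
        Finset.sum_le_card_nsmul T _ _ hterm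
    _ = (T.card : ℝ) * (a * (t:ℝ) ^ ν) ^ (ν⁻¹ - 1) := by rw [nsmul_eq_mul]
    _ ≤ (b * (t:ℝ) ^ ν) * (a * (t:ℝ) ^ ν) ^ (ν⁻¹ - 1) :=
        mul_le_mul_of_nonneg_right hcard (Real.rpow_nonneg hatν.le _)
    _ = b * a ^ (ν⁻¹ - 1) * t := by
        rw [Real.mul_rpow ha.le (Real.rpow_nonneg ht0.le _), ← Real.rpow_mul ht0.le]
        linear_combination (b * a ^ (ν⁻¹ - 1)) * htt
  -- put everything together
  have hvarS : variance (fun ω => ∑ k ∈ T, Y k ω) μ ≤ ε ^ 2 * M * (b * a ^ (ν⁻¹ - 1) * t) := by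
    rw [hvarsum]
    calc ∑ k ∈ T, variance (Y k) μ ≤ ∑ k ∈ T, ε ^ 2 * M * (k:ℝ) ^ (ν⁻¹ - 1) :=
        Finset.sum_le_sum hvar
    _ = ε ^ 2 * M * ∑ k ∈ T, (k:ℝ) ^ (ν⁻¹ - 1) := by rw [Finset.mul_sum]
    _ ≤ ε ^ 2 * M * (b * a ^ (ν⁻¹ - 1) * t) :=
        mul_le_mul_of_nonneg_left hsum (by positivity)
  have hc0sq : c0 ^ 2 = ε * t := by
    rw [hc0def, mul_pow, Real.sq_sqrt hε.le]
    congr 1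
    rw [← Real.rpow_natCast ((t:ℝ) ^ ((1:ℝ)/2)) 2, ← Real.rpow_mul ht0.le]
    norm_num
  calc variance (fun ω => ∑ k ∈ T, Y k ω) μ / c0 ^ 2
      ≤ (ε ^ 2 * M * (b * a ^ (ν⁻¹ - 1) * t)) / c0 ^ 2 := by
        exact (div_le_div_iff_of_pos_right (pow_pos hc0 2)).mpr hvarS
  _ = b * a ^ (ν⁻¹ - 1) * M * ε := by
        rw [hc0sq]
        field_simp
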